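/- arXiv:2502.04006 — 2 statements merged into one kernel-verified Lean document; each statement's English description precedes it below -/
import Mathlib

section
/- For n ≥ 2, the length of a longest chain of faces of CP(Lⁿ) equals n + 2; that is, there exists a chain F_{n+2} ⊊ ⋯ ⊊ F₁ of faces of CP(Lⁿ), and every chain F_l ⊊ ⋯ ⊊ F₁ of faces of CP(Lⁿ) satisfies l ≤ n + 2. -/
open Matrix
open scoped Pointwise

noncomputable section

/-- Frobenius inner product on real `n × n` matrices:
`⟨A,B⟩ = ∑ᵢⱼ Aᵢⱼ Bᵢⱼ`. -/
def mip {n : ℕ} (A B : Matrix (Fin n) (Fin n) ℝ) : ℝ :=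
  ∑ i, ∑ j, A i j * B i j

/-- `CPset S` (also used for `S₊(X)` when `S` is a subspace): the set of matrices of the
form `∑ᵢ aᵢaᵢᵀ` for a positive number of vectors `aᵢ ∈ S`. -/
def CPset {n : ℕ} (S : Set (Fin n → ℝ)) : Set (Matrix (Fin n) (Fin n) ℝ) :=
  {A | ∃ k : ℕ, 0 < k ∧ ∃ f : Fin k → (Fin n → ℝ),
        (∀ i, f i ∈ S) ∧ A = ∑ i, Matrix.vecMulVec (f i) (f i)}

/-- `COPset K`: symmetric matrices `A` with `xᵀAx ≥ 0` for all `x ∈ K`. -/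
def COPset {n : ℕ} (K : Set (Fin n → ℝ)) : Set (Matrix (Fin n) (Fin n) ℝ) :=
  {A | A.IsSymm ∧ ∀ x ∈ K, 0 ≤ x ⬝ᵥ A.mulVec x}

/-- `F` is a face of the convex cone `C`: a nonempty convex subcone such that
`a, b ∈ C`, `a + b ∈ F` imply `a, b ∈ F`. -/
def IsFaceOf {M : Type*} [AddCommMonoid M] [Module ℝ M] (C F : Set M) : Prop :=
  F.Nonempty ∧ F ⊆ C ∧ Convex ℝ F ∧ (∀ x ∈ F, ∀ c : ℝ, 0 ≤ c → c • x ∈ F) ∧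
    ∀ a ∈ C, ∀ b ∈ C, a + b ∈ F → a ∈ F ∧ b ∈ F

/-- Exposed face of a cone of matrices (w.r.t. the trace inner product). -/
def IsExposedFaceOf {n : ℕ} (C F : Set (Matrix (Fin n) (Fin n) ℝ)) : Prop :=
  IsFaceOf C F ∧ ∃ H : Matrix (Fin n) (Fin n) ℝ,
    (∀ A ∈ C, 0 ≤ mip H A) ∧ F = {A ∈ C | mip H A = 0}

/-- Dimension of a set: dimension of its linear span. -/
def setDim {M : Type*} [AddCommGroup M] [Module ℝ M] (S : Set M) : ℕ :=
  Module.finrank ℝ (Submodule.span ℝ S)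

/-- The ray `ℝ₊ • x`. -/
def rayOf {M : Type*} [AddCommMonoid M] [Module ℝ M] (x : M) : Set M :=
  {y | ∃ c : ℝ, 0 ≤ c ∧ y = c • x}

/-- An extreme ray: a one-dimensional face. -/
def IsExtremeRayOf {M : Type*} [AddCommGroup M] [Module ℝ M] (C F : Set M) : Prop :=
  IsFaceOf C F ∧ setDim F = 1

/-- The second-order cone `L^{m+1} = {x : x₀ ≥ ‖(x₁,…,xₘ)‖}`. -/
def soc (m : ℕ) : Set (Fin (m+1) → ℝ) :=
  {x | Real.sqrt (∑ i : Fin m, x i.succ ^ 2) ≤ x 0}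

/-- The boundary `∂L^{m+1} = {x : x₀ = ‖(x₁,…,xₘ)‖}`. -/
def socBd (m : ℕ) : Set (Fin (m+1) → ℝ) :=
  {x | Real.sqrt (∑ i : Fin m, x i.succ ^ 2) = x 0}

/-- The interior `int L^{m+1} = {x : x₀ > ‖(x₁,…,xₘ)‖}`. -/
def socInt (m : ℕ) : Set (Fin (m+1) → ℝ) :=
  {x | Real.sqrt (∑ i : Fin m, x i.succ ^ 2) < x 0}

/-- The matrix `J = diag(1, −1, …, −1)`. -/
def Jmat (m : ℕ) : Matrix (Fin (m+1)) (Fin (m+1)) ℝ :=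
  Matrix.diagonal fun i => if i = 0 then 1 else -1

/-- The hyperplane `{x : x ⬝ u = 0}` as a submodule. -/
def perpHyp {n : ℕ} (u : Fin n → ℝ) : Submodule ℝ (Fin n → ℝ) where
  carrier := {x | x ⬝ᵥ u = 0}
  add_mem' := by
    intro a b ha hb
    simp only [Set.mem_setOf_eq, add_dotProduct] at *
    linarith
  zero_mem' := by simp [zero_dotProduct]
  smul_mem' := by
    intro c a ha
    simp only [Set.mem_setOf_eq, smul_dotProduct] at *
    simp [ha]

/-- A polyhedral cone: nonnegative combinations of finitely many vectors. -/
def IsPolyhedralCone {M : Type*} [AddCommMonoid M] [Module ℝ M] (S : Set M) : Prop :=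
  ∃ (k : ℕ) (g : Fin k → M),
    S = {x | ∃ c : Fin k → ℝ, (∀ i, 0 ≤ c i) ∧ x = ∑ i, c i • g i}

end


noncomputable section

-- quadratic form
def qf (m : ℕ) (x : Fin (m+1) → ℝ) : ℝ := x 0 ^ 2 - ∑ i : Fin m, x i.succ ^ 2

-- bilinear form
def bq (m : ℕ) (x y : Fin (m+1) → ℝ) : ℝ := x 0 * y 0 - ∑ i : Fin m, x i.succ * y i.succ

lemma mip_add {n : ℕ} (H A B : Matrix (Fin n) (Fin n) ℝ) :
    mip H (A + B) = mip H A + mip H B := by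
  simp [mip, Matrix.add_apply, mul_add, Finset.sum_add_distrib]

lemma mip_smul {n : ℕ} (H : Matrix (Fin n) (Fin n) ℝ) (c : ℝ) (A) :
    mip H (c • A) = c * mip H A := by
  simp [mip, Matrix.smul_apply, smul_eq_mul, Finset.mul_sum]
  congr 1; ext i; congr 1; ext j; ring

lemma mip_sub {n : ℕ} (H A B : Matrix (Fin n) (Fin n) ℝ) :
    mip H (A - B) = mip H A - mip H B := by
  simp [mip, Matrix.sub_apply, mul_sub, Finset.sum_sub_distrib]

lemma mip_sum {n : ℕ} (H : Matrix (Fin n) (Fin n) ℝ) {ι : Type*} (s : Finset ι)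
    (f : ι → Matrix (Fin n) (Fin n) ℝ) :
    mip H (∑ i ∈ s, f i) = ∑ i ∈ s, mip H (f i) := by
  classical
  induction s using Finset.cons_induction with
  | empty => simp [mip]
  | cons a s ha ih => rw [Finset.sum_cons, mip_add, ih, Finset.sum_cons]

lemma mip_J {m : ℕ} (A : Matrix (Fin (m+1)) (Fin (m+1)) ℝ) :
    mip (Jmat m) A = A 0 0 - ∑ i : Fin m, A i.succ i.succ := by
  have h : ∀ i : Fin (m+1), (∑ j, Jmat m i j * A i j)
      = (if i = 0 then A i i else - A i i) := by
    intro i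
    rw [Finset.sum_eq_single i]
    · by_cases hi : i = 0 <;> simp [Jmat, Matrix.diagonal_apply_eq, hi]
    · intro b _ hb
      simp [Jmat, Matrix.diagonal_apply_ne _ (Ne.symm hb)]
    · simp
  unfold mip
  simp_rw [h]
  rw [Fin.sum_univ_succ]
  simp [Fin.succ_ne_zero]
  ring

lemma mip_vmv {m : ℕ} (x : Fin (m+1) → ℝ) :
    mip (Jmat m) (Matrix.vecMulVec x x) = qf m x := by
  rw [mip_J]
  simp [Matrix.vecMulVec_apply, qf, sq]

lemma vmv_apply {n : ℕ} (x y : Fin n → ℝ) (i j) :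
    Matrix.vecMulVec x y i j = x i * y j := rfl

lemma vmv_neg {n : ℕ} (x : Fin n → ℝ) :
    Matrix.vecMulVec (-x) (-x) = Matrix.vecMulVec x x := by
  ext i j; simp [vmv_apply]

lemma vmv_smul {n : ℕ} (c : ℝ) (x : Fin n → ℝ) :
    Matrix.vecMulVec (c • x) (c • x) = (c^2) • Matrix.vecMulVec x x := by
  ext i j; simp [vmv_apply]; ring

lemma vmv_zero {n : ℕ} :
    Matrix.vecMulVec (0 : Fin n → ℝ) (0 : Fin n → ℝ) = (0 : Matrix (Fin n) (Fin n) ℝ) := by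
  ext i j; simp [vmv_apply]

lemma vmv_symm {n : ℕ} (x : Fin n → ℝ) : (Matrix.vecMulVec x x).IsSymm := by
  apply Matrix.IsSymm.ext; intro i j; simp [vmv_apply]; ring

lemma dot_vmv {n : ℕ} (v x : Fin n → ℝ) :
    v ⬝ᵥ (Matrix.vecMulVec x x).mulVec v = (x ⬝ᵥ v)^2 := by
  simp [dotProduct, Matrix.mulVec, Matrix.vecMulVec_apply, Finset.mul_sum,
    Finset.sum_mul, sq]
  rw [Finset.sum_comm]
  congr 1; ext i; congr 1; ext j; ring

lemma mem_soc_iff {m : ℕ} {x : Fin (m+1) → ℝ} :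
    x ∈ soc m ↔ 0 ≤ x 0 ∧ 0 ≤ qf m x := by
  have hs : (0:ℝ) ≤ ∑ i : Fin m, x i.succ ^ 2 := by positivity
  constructor
  · intro h
    have h0 : 0 ≤ x 0 := le_trans (Real.sqrt_nonneg _) h
    refine ⟨h0, ?_⟩
    have := Real.sq_sqrt hs
    unfold soc at h
    simp only [Set.mem_setOf_eq] at h
    unfold qf
    nlinarith [Real.sqrt_nonneg (∑ i : Fin m, x i.succ ^ 2)]
  · rintro ⟨h0, hq⟩
    unfold soc qf at *
    simp only [Set.mem_setOf_eq]
    have : ∑ i : Fin m, x i.succ ^ 2 ≤ (x 0)^2 := by linarith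
    calc Real.sqrt (∑ i : Fin m, x i.succ ^ 2) ≤ Real.sqrt ((x 0)^2) :=
          Real.sqrt_le_sqrt this
      _ = x 0 := Real.sqrt_sq h0

lemma qf_nonneg_of_mem {m : ℕ} {x : Fin (m+1) → ℝ} (h : x ∈ soc m) : 0 ≤ qf m x :=
  (mem_soc_iff.1 h).2

lemma zero_mem_soc {m : ℕ} : (0 : Fin (m+1) → ℝ) ∈ soc m := by
  rw [mem_soc_iff]; simp [qf]

lemma soc_smul {m : ℕ} {x : Fin (m+1) → ℝ} (h : x ∈ soc m) {c : ℝ} (hc : 0 ≤ c) :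
    c • x ∈ soc m := by
  rw [mem_soc_iff] at h ⊢
  constructor
  · simpa using mul_nonneg hc h.1
  · have : qf m (c • x) = c^2 * qf m x := by
      simp [qf, Pi.smul_apply, smul_eq_mul, mul_pow, ← Finset.mul_sum]; ring
    rw [this]
    exact mul_nonneg (sq_nonneg c) h.2

section CP
variable {n : ℕ} {S : Set (Fin n → ℝ)}

lemma zero_mem_CP (h0 : (0 : Fin n → ℝ) ∈ S) : (0 : Matrix (Fin n) (Fin n) ℝ) ∈ CPset S := by
  exact ⟨1, one_pos, fun _ => 0, fun _ => h0, by simp [vmv_zero]⟩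

lemma CP_add {A B : Matrix (Fin n) (Fin n) ℝ} (hA : A ∈ CPset S) (hB : B ∈ CPset S) :
    A + B ∈ CPset S := by
  obtain ⟨k1, hk1, f1, hf1, rfl⟩ := hA
  obtain ⟨k2, hk2, f2, hf2, rfl⟩ := hB
  refine ⟨k1 + k2, by omega, Fin.append f1 f2, ?_, ?_⟩
  · intro i
    induction i using Fin.addCases with
    | left i => simpa [Fin.append_left] using hf1 i
    | right i => simpa [Fin.append_right] using hf2 i
  · rw [Fin.sum_univ_add]
    simp [Fin.append_left, Fin.append_right]

lemma CP_smul (hS : ∀ x ∈ S, ∀ c : ℝ, 0 ≤ c → c • x ∈ S)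
    {A : Matrix (Fin n) (Fin n) ℝ} (hA : A ∈ CPset S) {c : ℝ} (hc : 0 ≤ c) :
    c • A ∈ CPset S := by
  obtain ⟨k, hk, f, hf, rfl⟩ := hA
  refine ⟨k, hk, fun i => Real.sqrt c • f i, fun i => hS _ (hf i) _ (Real.sqrt_nonneg c), ?_⟩
  rw [Finset.smul_sum]
  congr 1; ext i
  rw [vmv_smul, Real.sq_sqrt hc]

lemma CP_sum {ι : Type*} {s : Finset ι} (hs : s.Nonempty)
    {f : ι → Matrix (Fin n) (Fin n) ℝ} (hf : ∀ i ∈ s, f i ∈ CPset S) :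
    (∑ i ∈ s, f i) ∈ CPset S := by
  classical
  induction hs using Finset.Nonempty.cons_induction with
  | singleton a => simpa using hf a (by simp)
  | cons a s ha hne ih =>
      rw [Finset.sum_cons]
      exact CP_add (hf a (by simp)) (ih (fun i hi => hf i (by simp [hi])))

lemma single_mem_CP {x : Fin n → ℝ} (hx : x ∈ S) :
    Matrix.vecMulVec x x ∈ CPset S :=
  ⟨1, one_pos, fun _ => x, fun _ => hx, by simp⟩

lemma CP_decomp_diag {A : Matrix (Fin n) (Fin n) ℝ} {k : ℕ} {f : Fin k → Fin n → ℝ}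
    (hA : A = ∑ i, Matrix.vecMulVec (f i) (f i)) (l : Fin n) :
    A l l = ∑ i, (f i l)^2 := by
  rw [hA]
  simp [Matrix.sum_apply, vmv_apply, sq]

end CP

section CPsoc
variable {m : ℕ}

lemma CP_convex : Convex ℝ (CPset (soc m)) := by
  intro A hA B hB a b ha hb hab
  have h1 : a • A ∈ CPset (soc m) := CP_smul (fun x hx c hc => soc_smul hx hc) hA ha
  have h2 : b • B ∈ CPset (soc m) := CP_smul (fun x hx c hc => soc_smul hx hc) hB hb
  exact CP_add h1 h2

lemma CP_diag_nonneg {A : Matrix (Fin (m+1)) (Fin (m+1)) ℝ} (hA : A ∈ CPset (soc m))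
    (l : Fin (m+1)) : 0 ≤ A l l := by
  obtain ⟨k, hk, f, hf, rfl⟩ := hA
  rw [CP_decomp_diag rfl l]
  positivity

lemma CP_psd {A : Matrix (Fin (m+1)) (Fin (m+1)) ℝ} (hA : A ∈ CPset (soc m))
    (v : Fin (m+1) → ℝ) : 0 ≤ v ⬝ᵥ A.mulVec v := by
  obtain ⟨k, hk, f, hf, rfl⟩ := hA
  have hlin : (∑ i, Matrix.vecMulVec (f i) (f i)).mulVec v
      = ∑ i, (Matrix.vecMulVec (f i) (f i)).mulVec v :=
    map_sum (Matrix.mulVec.addMonoidHomLeft v) _ _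
  have hdot : v ⬝ᵥ (∑ i, (Matrix.vecMulVec (f i) (f i)).mulVec v)
      = ∑ i, v ⬝ᵥ (Matrix.vecMulVec (f i) (f i)).mulVec v := by
    classical
    induction (Finset.univ : Finset (Fin k)) using Finset.cons_induction with
    | empty => simp
    | cons a s ha ih => rw [Finset.sum_cons, Finset.sum_cons, dotProduct_add, ih]
  rw [hlin, hdot]
  apply Finset.sum_nonneg
  intro i _
  rw [dot_vmv]
  positivity

lemma CP_symm {A : Matrix (Fin (m+1)) (Fin (m+1)) ℝ} (hA : A ∈ CPset (soc m)) :
    A.IsSymm := by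
  obtain ⟨k, hk, f, hf, rfl⟩ := hA
  apply Matrix.IsSymm.ext
  intro i j
  simp [Matrix.sum_apply, vmv_apply]
  congr 1; ext l; ring

lemma CP_tau_nonneg {A : Matrix (Fin (m+1)) (Fin (m+1)) ℝ} (hA : A ∈ CPset (soc m)) :
    0 ≤ mip (Jmat m) A := by
  obtain ⟨k, hk, f, hf, rfl⟩ := hA
  rw [mip_sum]
  apply Finset.sum_nonneg
  intro i _
  rw [mip_vmv]
  exact qf_nonneg_of_mem (hf i)

end CPsoc

section SZ
variable {m : ℕ}

lemma qf_neg (x : Fin (m+1) → ℝ) : qf m (-x) = qf m x := by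
  simp [qf]

lemma qf_comb (a b : ℝ) (x y : Fin (m+1) → ℝ) :
    qf m (a • x + b • y) = a^2 * qf m x + 2*a*b*(bq m x y) + b^2 * qf m y := by
  simp only [qf, bq, Pi.add_apply, Pi.smul_apply, smul_eq_mul]
  have h : ∀ l : Fin m, (a * x l.succ + b * y l.succ)^2
      = a^2*(x l.succ)^2 + 2*a*b*(x l.succ * y l.succ) + b^2*(y l.succ)^2 := by
    intro l; ring
  simp_rw [h]
  rw [Finset.sum_add_distrib, Finset.sum_add_distrib, ← Finset.mul_sum, ← Finset.mul_sum,
    ← Finset.mul_sum]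
  ring

lemma vmv_rot {c s : ℝ} (h : c^2 + s^2 = 1) (x y : Fin (m+1) → ℝ) :
    Matrix.vecMulVec (c • x + s • y) (c • x + s • y)
      + Matrix.vecMulVec ((-s) • x + c • y) ((-s) • x + c • y)
    = Matrix.vecMulVec x x + Matrix.vecMulVec y y := by
  ext i j
  simp only [Matrix.add_apply, vmv_apply, Pi.add_apply, Pi.smul_apply, smul_eq_mul]
  linear_combination (x i * x j + y i * y j) * h

lemma rotate_done {k : ℕ} (f : Fin k → Fin (m+1) → ℝ) (h : ∀ i, 0 ≤ qf m (f i)) :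
    ∃ g : Fin k → Fin (m+1) → ℝ, (∀ i, g i ∈ soc m) ∧
      ∑ i, Matrix.vecMulVec (g i) (g i) = ∑ i, Matrix.vecMulVec (f i) (f i) := by
  refine ⟨fun i => if 0 ≤ f i 0 then f i else -(f i), fun i => ?_, ?_⟩
  · by_cases hi : 0 ≤ f i 0
    · simp only [hi, if_true]
      exact mem_soc_iff.2 ⟨hi, h i⟩
    · simp only [hi, if_false]
      refine mem_soc_iff.2 ⟨?_, ?_⟩
      · simp only [Pi.neg_apply]; linarith [lt_of_not_ge hi]
      · rw [qf_neg]; exact h i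
  · apply Finset.sum_congr rfl
    intro i _
    by_cases hi : 0 ≤ f i 0 <;> simp [hi, vmv_neg]

lemma rotate (N : ℕ) : ∀ {k : ℕ} (f : Fin k → Fin (m+1) → ℝ),
    (Finset.univ.filter (fun i => qf m (f i) ≠ 0)).card ≤ N →
    0 ≤ ∑ i, qf m (f i) →
    ∃ g : Fin k → Fin (m+1) → ℝ, (∀ i, g i ∈ soc m) ∧
      ∑ i, Matrix.vecMulVec (g i) (g i) = ∑ i, Matrix.vecMulVec (f i) (f i) := by
  induction N with
  | zero =>
      intro k f hcard _
      apply rotate_done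
      intro i
      have : Finset.univ.filter (fun i => qf m (f i) ≠ 0) = ∅ :=
        Finset.card_eq_zero.1 (Nat.le_zero.1 hcard)
      have hi : i ∉ Finset.univ.filter (fun i => qf m (f i) ≠ 0) := by rw [this]; simp
      simp only [Finset.mem_filter, Finset.mem_univ, true_and, not_not] at hi
      rw [hi]
  | succ N ih =>
      intro k f hcard hsum
      by_cases hall : ∀ i, 0 ≤ qf m (f i)
      · exact rotate_done f hall
      push_neg at hall
      obtain ⟨i, hi⟩ := hall
      have hex : ∃ j, 0 < qf m (f j) := by
        by_contra h
        push_neg at h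
        have hsum0 : ∑ l, qf m (f l) = 0 :=
          le_antisymm (Finset.sum_nonpos fun l _ => h l) hsum
        have := (Finset.sum_eq_zero_iff_of_nonpos (fun l _ => h l)).1 hsum0 i (Finset.mem_univ i)
        exact absurd this (ne_of_lt hi)
      obtain ⟨j, hj⟩ := hex
      have hij : i ≠ j := by
        intro h; rw [h] at hi; linarith
      set qi := qf m (f i) with hqi
      set qj := qf m (f j) with hqj
      set B := bq m (f i) (f j) with hB
      set D := Real.sqrt (B^2 - qi*qj) with hDdef
      have hD : D^2 = B^2 - qi*qj := Real.sq_sqrt (by nlinarith)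
      set t := (-B + D)/qj with htdef
      have hqj0 : qj ≠ 0 := ne_of_gt hj
      have h1 : qj * t = -B + D := by
        rw [htdef]; field_simp
      have hroot : qi + 2*B*t + qj*t^2 = 0 := by
        have h2 : qj * (qi + 2*B*t + qj*t^2) = 0 := by
          linear_combination (2*B + qj*t + (-B + D)) * h1 + hD
        rcases mul_eq_zero.1 h2 with h | h
        · exact absurd h hqj0
        · exact h
      set c := 1/Real.sqrt (1 + t^2) with hcdef
      have hsq : Real.sqrt (1+t^2)^2 = 1 + t^2 := Real.sq_sqrt (by positivity)
      have hsqpos : 0 < Real.sqrt (1+t^2) := Real.sqrt_pos.2 (by positivity)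
      have hc2 : c^2 * (1 + t^2) = 1 := by
        rw [hcdef, div_pow, one_pow, hsq]
        field_simp
      set s := c * t with hsdef
      have hcs : c^2 + s^2 = 1 := by
        rw [hsdef]
        linear_combination hc2
      set u := c • f i + s • f j with hudef
      set v := (-s) • f i + c • f j with hvdef
      have hqu : qf m u = 0 := by
        rw [hudef, qf_comb, ← hqi, ← hqj, ← hB, hsdef]
        linear_combination c^2 * hroot
      set g := Function.update (Function.update f i u) j v with hgdef
      have hgi : g i = u := by
        rw [hgdef, Function.update_of_ne hij, Function.update_self]
      have hgj : g j = v := by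
        rw [hgdef, Function.update_self]
      have hgl : ∀ l, l ≠ i → l ≠ j → g l = f l := by
        intro l hli hlj
        rw [hgdef, Function.update_of_ne hlj, Function.update_of_ne hli]
      have hiej : i ∈ Finset.univ.erase j := Finset.mem_erase.2 ⟨hij, Finset.mem_univ i⟩
      have hsumeq : ∑ l, Matrix.vecMulVec (g l) (g l) = ∑ l, Matrix.vecMulVec (f l) (f l) := by
        rw [← Finset.add_sum_erase _ (fun l => Matrix.vecMulVec (g l) (g l)) (Finset.mem_univ j),
            ← Finset.add_sum_erase _ (fun l => Matrix.vecMulVec (g l) (g l)) hiej,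
            ← Finset.add_sum_erase _ (fun l => Matrix.vecMulVec (f l) (f l)) (Finset.mem_univ j),
            ← Finset.add_sum_erase _ (fun l => Matrix.vecMulVec (f l) (f l)) hiej]
        have hrest : ∑ l ∈ (Finset.univ.erase j).erase i, Matrix.vecMulVec (g l) (g l)
            = ∑ l ∈ (Finset.univ.erase j).erase i, Matrix.vecMulVec (f l) (f l) := by
          apply Finset.sum_congr rfl
          intro l hl
          have hl1 := Finset.mem_erase.1 hl
          have hl2 := Finset.mem_erase.1 hl1.2
          rw [hgl l hl1.1 hl2.1]
        rw [hrest, hgj, hgi, ← add_assoc, ← add_assoc]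
        congr 1
        have hthis := vmv_rot hcs (f i) (f j)
        calc Matrix.vecMulVec v v + Matrix.vecMulVec u u
            = Matrix.vecMulVec u u + Matrix.vecMulVec v v := add_comm _ _
          _ = Matrix.vecMulVec (f i) (f i) + Matrix.vecMulVec (f j) (f j) := hthis
          _ = Matrix.vecMulVec (f j) (f j) + Matrix.vecMulVec (f i) (f i) := add_comm _ _
      have hcard' : (Finset.univ.filter (fun l => qf m (g l) ≠ 0)).card ≤ N := by
        have hsub : Finset.univ.filter (fun l => qf m (g l) ≠ 0)
            ⊆ (Finset.univ.filter (fun l => qf m (f l) ≠ 0)).erase i := by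
          intro l hl
          have hl' : qf m (g l) ≠ 0 := (Finset.mem_filter.1 hl).2
          have hli : l ≠ i := by
            intro h; rw [h, hgi, hqu] at hl'; exact hl' rfl
          refine Finset.mem_erase.2 ⟨hli, Finset.mem_filter.2 ⟨Finset.mem_univ l, ?_⟩⟩
          by_cases hlj : l = j
          · rw [hlj]; exact ne_of_gt hj
          · rw [← hgl l hli hlj]; exact hl'
        have hicard : i ∈ Finset.univ.filter (fun l => qf m (f l) ≠ 0) :=
          Finset.mem_filter.2 ⟨Finset.mem_univ i, ne_of_lt hi⟩
        calc (Finset.univ.filter (fun l => qf m (g l) ≠ 0)).card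
            ≤ ((Finset.univ.filter (fun l => qf m (f l) ≠ 0)).erase i).card :=
              Finset.card_le_card hsub
          _ = (Finset.univ.filter (fun l => qf m (f l) ≠ 0)).card - 1 :=
              Finset.card_erase_of_mem hicard
          _ ≤ N := by omega
      have hsum' : 0 ≤ ∑ l, qf m (g l) := by
        have e1 : ∑ l, qf m (g l) = mip (Jmat m) (∑ l, Matrix.vecMulVec (g l) (g l)) := by
          rw [mip_sum]; simp_rw [mip_vmv]
        have e2 : ∑ l, qf m (f l) = mip (Jmat m) (∑ l, Matrix.vecMulVec (f l) (f l)) := by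
          rw [mip_sum]; simp_rw [mip_vmv]
        rw [e1, hsumeq, ← e2]
        exact hsum
      obtain ⟨g', hg'mem, hg'sum⟩ := ih g hcard' hsum'
      exact ⟨g', hg'mem, by rw [hg'sum, hsumeq]⟩

lemma sturm_zhang {A : Matrix (Fin (m+1)) (Fin (m+1)) ℝ} (hsymm : A.IsSymm)
    (hpsd : ∀ v, 0 ≤ v ⬝ᵥ A.mulVec v) (htau : 0 ≤ mip (Jmat m) A) :
    A ∈ CPset (soc m) := by
  have hps : A.PosSemidef := by
    refine Matrix.PosSemidef.of_dotProduct_mulVec_nonneg ?_ ?_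
    · ext i j
      simpa [Matrix.conjTranspose_apply] using hsymm.apply i j
    · intro x
      simpa using hpsd x
  obtain ⟨Bm, hB⟩ : ∃ Bm : Matrix (Fin (m+1)) (Fin (m+1)) ℝ, A = Bmᴴ * Bm := by
    open scoped MatrixOrder in
    obtain ⟨B, hB⟩ := CStarAlgebra.nonneg_iff_eq_star_mul_self.mp hps.nonneg
    exact ⟨B, hB⟩
  have hd : A = ∑ i, Matrix.vecMulVec (fun j => Bm i j) (fun j => Bm i j) := by
    rw [hB]; ext j l
    simp [Matrix.mul_apply, Matrix.sum_apply, vmv_apply, Matrix.conjTranspose_apply]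
  have hsum : 0 ≤ ∑ i, qf m (fun j => Bm i j) := by
    have e : mip (Jmat m) A = ∑ i, qf m (fun j => Bm i j) := by
      rw [hd, mip_sum]; simp_rw [mip_vmv]
    rw [← e]; exact htau
  obtain ⟨g, hg, hgsum⟩ := rotate (m := m)
    (Finset.univ.filter (fun i => qf m (fun j => Bm i j) ≠ 0)).card
    (fun i j => Bm i j) le_rfl hsum
  exact ⟨m+1, Nat.succ_pos m, g, hg, by rw [hgsum, ← hd]⟩

end SZ

section Faces
variable {m : ℕ}

def Kset (m : ℕ) (F : Set (Matrix (Fin (m+1)) (Fin (m+1)) ℝ)) : Set (Fin (m+1) → ℝ) :=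
  {x | x ∈ soc m ∧ Matrix.vecMulVec x x ∈ F}

variable {F G : Set (Matrix (Fin (m+1)) (Fin (m+1)) ℝ)}

lemma zero_mem_face (hF : IsFaceOf (CPset (soc m)) F) : 0 ∈ F := by
  obtain ⟨A, hA⟩ := hF.1
  simpa using hF.2.2.2.1 A hA 0 le_rfl

lemma face_add (hF : IsFaceOf (CPset (soc m)) F) {a b : Matrix (Fin (m+1)) (Fin (m+1)) ℝ}
    (ha : a ∈ F) (hb : b ∈ F) : a + b ∈ F := by
  have h := hF.2.2.1 ha hb (by norm_num : (0:ℝ) ≤ 1/2) (by norm_num : (0:ℝ) ≤ 1/2) (by norm_num)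
  have h2 := hF.2.2.2.1 _ h 2 (by norm_num)
  have : (2:ℝ) • ((1/2 : ℝ) • a + (1/2 : ℝ) • b) = a + b := by
    rw [smul_add, smul_smul, smul_smul]
    norm_num
  rwa [this] at h2

lemma face_sum (hF : IsFaceOf (CPset (soc m)) F) {ι : Type*} {s : Finset ι} (hs : s.Nonempty)
    {a : ι → Matrix (Fin (m+1)) (Fin (m+1)) ℝ} (ha : ∀ i ∈ s, a i ∈ F) :
    (∑ i ∈ s, a i) ∈ F := by
  classical
  induction hs using Finset.Nonempty.cons_induction with
  | singleton i => simpa using ha i (by simp)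
  | cons i s hi hne ih =>
      rw [Finset.sum_cons]
      exact face_add hF (ha i (by simp)) (ih (fun l hl => ha l (by simp [hl])))

lemma face_split (hF : IsFaceOf (CPset (soc m)) F) {ι : Type*} (s : Finset ι)
    {a : ι → Matrix (Fin (m+1)) (Fin (m+1)) ℝ} (ha : ∀ i ∈ s, a i ∈ CPset (soc m))
    (hsum : (∑ i ∈ s, a i) ∈ F) : ∀ i ∈ s, a i ∈ F := by
  classical
  induction s using Finset.cons_induction with
  | empty => simp
  | cons i s hi ih =>
      rw [Finset.sum_cons] at hsum
      have hrest : (∑ l ∈ s, a l) ∈ CPset (soc m) := by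
        rcases s.eq_empty_or_nonempty with rfl | hne
        · simpa using zero_mem_CP zero_mem_soc
        · exact CP_sum hne (fun l hl => ha l (by simp [hl]))
      have hsplit := hF.2.2.2.2 _ (ha i (by simp)) _ hrest hsum
      intro l hl
      rcases Finset.mem_cons.1 hl with rfl | hl
      · exact hsplit.1
      · exact ih (fun x hx => ha x (by simp [hx])) hsplit.2 l hl

lemma mem_face_iff (hF : IsFaceOf (CPset (soc m)) F)
    {A : Matrix (Fin (m+1)) (Fin (m+1)) ℝ} :
    A ∈ F ↔ ∃ k : ℕ, 0 < k ∧ ∃ f : Fin k → (Fin (m+1) → ℝ),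
      (∀ i, f i ∈ Kset m F) ∧ A = ∑ i, Matrix.vecMulVec (f i) (f i) := by
  constructor
  · intro hA
    obtain ⟨k, hk, f, hf, hAeq⟩ := hF.2.1 hA
    refine ⟨k, hk, f, fun i => ⟨hf i, ?_⟩, hAeq⟩
    have := face_split hF Finset.univ
      (fun i _ => single_mem_CP (hf i)) (by rw [← hAeq]; exact hA)
    exact this i (Finset.mem_univ i)
  · rintro ⟨k, hk, f, hf, rfl⟩
    apply face_sum hF (Finset.univ_nonempty_iff.2 ?_) (fun i _ => (hf i).2)
    exact Fin.pos_iff_nonempty.1 hk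

lemma face_eq_of_Kset_eq (hF : IsFaceOf (CPset (soc m)) F) (hG : IsFaceOf (CPset (soc m)) G)
    (h : Kset m F = Kset m G) : F = G := by
  ext A
  rw [mem_face_iff hF, mem_face_iff hG, h]

lemma dot_comb {T : Finset (Fin (m+1) → ℝ)} {c : (Fin (m+1) → ℝ) → ℝ} (v : Fin (m+1) → ℝ) :
    (∑ x ∈ T, c x • x) ⬝ᵥ v = ∑ x ∈ T, c x * (x ⬝ᵥ v) := by
  classical
  induction T using Finset.cons_induction with
  | empty => simp
  | cons a T ha ih => rw [Finset.sum_cons, add_dotProduct, smul_dotProduct,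
      Finset.sum_cons, ih]; simp

lemma dot_sumvmv {T : Finset (Fin (m+1) → ℝ)} (v : Fin (m+1) → ℝ) :
    v ⬝ᵥ (∑ x ∈ T, Matrix.vecMulVec x x).mulVec v = ∑ x ∈ T, (x ⬝ᵥ v)^2 := by
  classical
  induction T using Finset.cons_induction with
  | empty => simp
  | cons a T ha ih => rw [Finset.sum_cons, Matrix.add_mulVec, dotProduct_add,
      Finset.sum_cons, ih, dot_vmv]

lemma key_mem (hF : IsFaceOf (CPset (soc m)) F) {y : Fin (m+1) → ℝ} (hy : y ∈ soc m)
    (hyW : y ∈ Submodule.span ℝ (Kset m F))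
    (hside : (∃ A ∈ F, 0 < mip (Jmat m) A) ∨ qf m y = 0) :
    y ∈ Kset m F := by
  classical
  by_cases hy0 : y = 0
  · subst hy0
    exact ⟨zero_mem_soc, by rw [vmv_zero]; exact zero_mem_face hF⟩
  rw [Submodule.mem_span_set] at hyW
  obtain ⟨co, hco, hy_eq⟩ := hyW
  set T := co.support with hT
  have hy_eq : ∑ x ∈ T, co x • x = y := hy_eq
  set σ : ℝ := ∑ x ∈ T, (co x)^2 with hσ
  have hσ0 : 0 < σ := by
    rcases lt_or_eq_of_le (Finset.sum_nonneg (fun x _ => sq_nonneg (co x)) : 0 ≤ σ) with h | h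
    · exact h
    · exfalso
      apply hy0
      rw [← hy_eq]
      apply Finset.sum_eq_zero
      intro x hx
      have := (Finset.sum_eq_zero_iff_of_nonneg (fun x _ => sq_nonneg (co x))).1 h.symm x hx
      have : co x = 0 := by nlinarith [this]
      simp [this]
  set ε : ℝ := 1/σ with hε
  have hε0 : 0 < ε := by positivity
  have hTne : T.Nonempty := by
    rcases T.eq_empty_or_nonempty with h | h
    · exfalso; apply hy0; rw [← hy_eq, h]; simp
    · exact h
  have hxT : ∀ x ∈ T, x ∈ Kset m F := fun x hx => hco hx
  set A₁ : Matrix (Fin (m+1)) (Fin (m+1)) ℝ := ∑ x ∈ T, Matrix.vecMulVec x x with hA₁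
  have hA₁F : A₁ ∈ F := face_sum hF hTne (fun x hx => (hxT x hx).2)
  have hA₁tau : 0 ≤ mip (Jmat m) A₁ := by
    rw [hA₁, mip_sum]
    exact Finset.sum_nonneg fun x hx => by rw [mip_vmv]; exact qf_nonneg_of_mem (hxT x hx).1
  have hqy : 0 ≤ qf m y := qf_nonneg_of_mem hy
  -- choose A
  obtain ⟨A, hAF, hAtau, hApsd1⟩ :
      ∃ A, A ∈ F ∧ ε * qf m y ≤ mip (Jmat m) A - mip (Jmat m) A₁ + mip (Jmat m) A₁ ∧
        ∀ v, ∑ x ∈ T, (x ⬝ᵥ v)^2 ≤ v ⬝ᵥ A.mulVec v := by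
    rcases hside with ⟨A₀, hA₀F, hA₀pos⟩ | hqy0
    · set t : ℝ := ε * qf m y / mip (Jmat m) A₀ with ht
      have ht0 : 0 ≤ t := by positivity
      refine ⟨A₁ + t • A₀, face_add hF hA₁F (hF.2.2.2.1 _ hA₀F t ht0), ?_, ?_⟩
      · rw [mip_add, mip_smul]
        have : t * mip (Jmat m) A₀ = ε * qf m y := by
          rw [ht]; field_simp
        linarith
      · intro v
        rw [Matrix.add_mulVec, dotProduct_add]
        have h1 : v ⬝ᵥ A₁.mulVec v = ∑ x ∈ T, (x ⬝ᵥ v)^2 := dot_sumvmv v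
        have h2 : 0 ≤ v ⬝ᵥ (t • A₀).mulVec v := by
          rw [Matrix.smul_mulVec, dotProduct_smul]
          exact smul_nonneg ht0 (CP_psd (hF.2.1 hA₀F) v)
        linarith
    · refine ⟨A₁, hA₁F, ?_, fun v => le_of_eq (dot_sumvmv v).symm⟩
      rw [hqy0]
      simpa using hA₁tau
  have hAtau' : ε * qf m y ≤ mip (Jmat m) A := by linarith
  set Y : Matrix (Fin (m+1)) (Fin (m+1)) ℝ := Matrix.vecMulVec y y with hY
  set M : Matrix (Fin (m+1)) (Fin (m+1)) ℝ := A - ε • Y with hM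
  have hMC : M ∈ CPset (soc m) := by
    apply sturm_zhang
    · -- symmetric
      have hAs : A.IsSymm := CP_symm (hF.2.1 hAF)
      have hYs : Y.IsSymm := vmv_symm y
      unfold Matrix.IsSymm at *
      rw [hM, Matrix.transpose_sub, Matrix.transpose_smul, hAs, hYs]
    · intro v
      rw [hM, Matrix.sub_mulVec, dotProduct_sub, Matrix.smul_mulVec,
        dotProduct_smul, hY, dot_vmv]
      have hcs : (y ⬝ᵥ v)^2 ≤ σ * ∑ x ∈ T, (x ⬝ᵥ v)^2 := by
        rw [← hy_eq, dot_comb]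
        exact Finset.sum_mul_sq_le_sq_mul_sq T _ _
      have h1 := hApsd1 v
      have hεσ : ε * σ = 1 := by
        rw [hε]; field_simp
      have h3 : ε * (y ⬝ᵥ v)^2 ≤ ∑ x ∈ T, (x ⬝ᵥ v)^2 := by
        calc ε * (y ⬝ᵥ v)^2 ≤ ε * (σ * ∑ x ∈ T, (x ⬝ᵥ v)^2) :=
              mul_le_mul_of_nonneg_left hcs hε0.le
          _ = (ε * σ) * ∑ x ∈ T, (x ⬝ᵥ v)^2 := by ring
          _ = ∑ x ∈ T, (x ⬝ᵥ v)^2 := by rw [hεσ]; ring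
      simp only [smul_eq_mul]
      linarith
    · rw [hM, mip_sub, mip_smul, hY, mip_vmv]
      linarith
  have hYC : ε • Y ∈ CPset (soc m) := by
    have hYe : ε • Y = Matrix.vecMulVec (Real.sqrt ε • y) (Real.sqrt ε • y) := by
      rw [hY, vmv_smul, Real.sq_sqrt hε0.le]
    rw [hYe]
    exact single_mem_CP (soc_smul hy (Real.sqrt_nonneg ε))
  have hMA : M + ε • Y = A := by rw [hM]; exact sub_add_cancel _ _
  have hsplit := hF.2.2.2.2 M hMC (ε • Y) hYC (by rw [hMA]; exact hAF)
  have hYF : Y ∈ F := by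
    have h := hF.2.2.2.1 _ hsplit.2 (1/ε) (by positivity)
    rwa [smul_smul, one_div, inv_mul_cancel₀ (ne_of_gt hε0), one_smul] at h
  exact ⟨hy, hYF⟩

open scoped Classical in
def sval (m : ℕ) (F : Set (Matrix (Fin (m+1)) (Fin (m+1)) ℝ)) : ℕ :=
  if ∃ A ∈ F, 0 < mip (Jmat m) A then 1 else 0

lemma Kset_determined (hF : IsFaceOf (CPset (soc m)) F) :
    Kset m F = {y | y ∈ soc m ∧ y ∈ Submodule.span ℝ (Kset m F) ∧
      ((∃ A ∈ F, 0 < mip (Jmat m) A) ∨ qf m y = 0)} := by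
  ext y
  constructor
  · intro hy
    refine ⟨hy.1, Submodule.subset_span hy, ?_⟩
    by_cases hex : ∃ A ∈ F, 0 < mip (Jmat m) A
    · exact Or.inl hex
    · right
      push_neg at hex
      have h1 := hex _ hy.2
      have h2 : mip (Jmat m) (Matrix.vecMulVec y y) = qf m y := mip_vmv y
      have h3 : 0 ≤ qf m y := qf_nonneg_of_mem hy.1
      rw [h2] at h1
      linarith
  · rintro ⟨h1, h2, h3⟩
    exact key_mem hF h1 h2 h3

lemma mu_strict (hF : IsFaceOf (CPset (soc m)) F) (hG : IsFaceOf (CPset (soc m)) G)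
    (hFG : F ⊆ G) (hne : F ≠ G) :
    Module.finrank ℝ (Submodule.span ℝ (Kset m F)) + sval m F
      < Module.finrank ℝ (Submodule.span ℝ (Kset m G)) + sval m G := by
  classical
  have hKsub : Kset m F ⊆ Kset m G := fun x hx => ⟨hx.1, hFG hx.2⟩
  have hspan : Submodule.span ℝ (Kset m F) ≤ Submodule.span ℝ (Kset m G) :=
    Submodule.span_mono hKsub
  have hrank : Module.finrank ℝ (Submodule.span ℝ (Kset m F))
      ≤ Module.finrank ℝ (Submodule.span ℝ (Kset m G)) :=
    Submodule.finrank_mono hspan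
  have hsv : sval m F ≤ sval m G := by
    unfold sval
    by_cases hex : ∃ A ∈ F, 0 < mip (Jmat m) A
    · rw [if_pos hex, if_pos ⟨hex.choose, hFG hex.choose_spec.1, hex.choose_spec.2⟩]
    · rw [if_neg hex]
      split <;> omega
  by_contra hcon
  push_neg at hcon
  have hreq : Module.finrank ℝ (Submodule.span ℝ (Kset m F))
      = Module.finrank ℝ (Submodule.span ℝ (Kset m G)) := by omega
  have hseq : sval m F = sval m G := by omega
  have hspaneq : Submodule.span ℝ (Kset m F) = Submodule.span ℝ (Kset m G) :=
    Submodule.eq_of_le_of_finrank_eq hspan hreq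
  have hiff : (∃ A ∈ F, 0 < mip (Jmat m) A) ↔ (∃ A ∈ G, 0 < mip (Jmat m) A) := by
    constructor
    · rintro ⟨A, hA, h⟩; exact ⟨A, hFG hA, h⟩
    · intro hGex
      by_contra hFex
      unfold sval at hseq
      rw [if_neg hFex, if_pos hGex] at hseq
      omega
  have hKeq : Kset m F = Kset m G := by
    rw [Kset_determined hF, Kset_determined hG, hspaneq, ← hspaneq]
    ext y
    simp only [Set.mem_setOf_eq, hspaneq, hiff]
  exact hne (face_eq_of_Kset_eq hF hG hKeq)

lemma mu_bound (hF : IsFaceOf (CPset (soc m)) F) :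
    Module.finrank ℝ (Submodule.span ℝ (Kset m F)) + sval m F ≤ m + 2 := by
  classical
  have h1 : Module.finrank ℝ (Submodule.span ℝ (Kset m F))
      ≤ Module.finrank ℝ (Fin (m+1) → ℝ) := Submodule.finrank_le _
  rw [Module.finrank_pi] at h1
  simp only [Fintype.card_fin] at h1
  have h2 : sval m F ≤ 1 := by unfold sval; split <;> omega
  omega

end Faces

section Chain
variable {m : ℕ}

def uvec (m r : ℕ) : Fin (m+1) → ℝ := fun l => if l.val = 0 ∨ l.val = r then 1 else 0

def wvec (m : ℕ) : Fin (m+1) → ℝ :=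
  fun l => if l.val = 0 then 1 else if l.val = 1 then -1 else 0

def Rface (m : ℕ) : Set (Matrix (Fin (m+1)) (Fin (m+1)) ℝ) :=
  {A | ∃ c : ℝ, 0 ≤ c ∧ A = c • Matrix.vecMulVec (uvec m 1) (uvec m 1)}

def Fface (m r : ℕ) : Set (Matrix (Fin (m+1)) (Fin (m+1)) ℝ) :=
  {A | A ∈ CPset (soc m) ∧ mip (Jmat m) A = 0 ∧ ∀ l : Fin (m+1), r ≤ l.val → A l l = 0}

lemma sum_if_val {k : ℕ} (r : ℕ) (hr : r < k) (c : ℝ) :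
    ∑ i : Fin k, (if i.val = r then c else 0) = c := by
  rw [Finset.sum_eq_single ⟨r, hr⟩]
  · simp
  · intro b _ hb
    have : b.val ≠ r := fun h => hb (Fin.ext h)
    simp [this]
  · simp

lemma qf_uvec (r : ℕ) (hr : 1 ≤ r) (hrm : r ≤ m) : qf m (uvec m r) = 0 := by
  unfold qf uvec
  have h0 : (if (0 : Fin (m+1)).val = 0 ∨ (0 : Fin (m+1)).val = r then (1:ℝ) else 0) = 1 := by
    simp
  rw [h0]
  have hsum : ∀ i : Fin m, ((if (i.succ : Fin (m+1)).val = 0 ∨ (i.succ : Fin (m+1)).val = r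
      then (1:ℝ) else 0))^2 = if i.val = r - 1 then (1:ℝ) else 0 := by
    intro i
    have hsv : (i.succ : Fin (m+1)).val = i.val + 1 := rfl
    by_cases h : i.val = r - 1
    · have h2 : i.val + 1 = r := by omega
      simp [hsv, h2, h]
      omega
    · have h1 : ¬(i.val + 1 = 0) := by omega
      have h2 : ¬(i.val + 1 = r) := by omega
      simp [hsv, h1, h2, h]
  simp_rw [hsum]
  rw [sum_if_val (r-1) (by omega) 1]
  norm_num

lemma uvec_mem_soc (r : ℕ) (hr : 1 ≤ r) (hrm : r ≤ m) : uvec m r ∈ soc m := by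
  rw [mem_soc_iff]
  constructor
  · unfold uvec; simp
  · rw [qf_uvec r hr hrm]

lemma qf_wvec (hm : 1 ≤ m) : qf m (wvec m) = 0 := by
  unfold qf wvec
  have h0 : (if (0 : Fin (m+1)).val = 0 then (1:ℝ) else if (0:Fin (m+1)).val = 1 then -1 else 0)
      = 1 := by simp
  rw [h0]
  have hsum : ∀ i : Fin m, ((if (i.succ : Fin (m+1)).val = 0 then (1:ℝ)
      else if (i.succ : Fin (m+1)).val = 1 then -1 else 0))^2
      = if i.val = 0 then (1:ℝ) else 0 := by
    intro i
    have hsv : (i.succ : Fin (m+1)).val = i.val + 1 := rfl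
    by_cases h : i.val = 0
    · simp [hsv, h]
    · have h1 : ¬(i.val + 1 = 0) := by omega
      have h2 : ¬(i.val + 1 = 1) := by omega
      simp [hsv, h1, h2, h]
  simp_rw [hsum]
  rw [sum_if_val 0 (by omega) 1]
  norm_num

lemma wvec_mem_soc (hm : 1 ≤ m) : wvec m ∈ soc m := by
  rw [mem_soc_iff]
  constructor
  · unfold wvec; simp
  · rw [qf_wvec hm]

lemma zero_isFace : IsFaceOf (CPset (soc m)) ({0} : Set (Matrix (Fin (m+1)) (Fin (m+1)) ℝ)) := by
  refine ⟨⟨0, rfl⟩, ?_, convex_singleton 0, ?_, ?_⟩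
  · intro A hA
    rw [Set.mem_singleton_iff] at hA
    rw [hA]
    exact zero_mem_CP zero_mem_soc
  · intro x hx c _
    rw [Set.mem_singleton_iff] at hx
    simp [hx]
  · intro a ha b hb hab
    rw [Set.mem_singleton_iff] at hab
    have hdiag : ∀ l, a l l = 0 ∧ b l l = 0 := by
      intro l
      have h1 : a l l + b l l = 0 := by
        have := congrFun (congrFun hab l) l
        simpa [Matrix.add_apply] using this
      have h2 := CP_diag_nonneg ha l
      have h3 := CP_diag_nonneg hb l
      constructor <;> linarith
    have key : ∀ (A : Matrix (Fin (m+1)) (Fin (m+1)) ℝ), A ∈ CPset (soc m) →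
        (∀ l, A l l = 0) → A = 0 := by
      rintro A ⟨k, hk, f, hf, rfl⟩ hz
      have hfz : ∀ i l, f i l = 0 := by
        intro i l
        have h1 := hz l
        rw [CP_decomp_diag rfl l] at h1
        have := (Finset.sum_eq_zero_iff_of_nonneg
          (fun i _ => sq_nonneg (f i l))).1 h1 i (Finset.mem_univ i)
        exact pow_eq_zero_iff (by norm_num) |>.1 this
      apply Finset.sum_eq_zero
      intro i _
      ext l l'
      simp [vmv_apply, hfz]
    constructor <;> rw [Set.mem_singleton_iff]
    · exact key a ha (fun l => (hdiag l).1)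
    · exact key b hb (fun l => (hdiag l).2)

lemma Fface_isFace (r : ℕ) : IsFaceOf (CPset (soc m)) (Fface m r) := by
  refine ⟨⟨0, ?_⟩, fun A hA => hA.1, ?_, ?_, ?_⟩
  · refine ⟨zero_mem_CP zero_mem_soc, ?_, ?_⟩
    · simp [mip]
    · intro l _; simp
  · intro A hA B hB α β hα hβ hαβ
    refine ⟨CP_convex hA.1 hB.1 hα hβ hαβ, ?_, ?_⟩
    · rw [mip_add, mip_smul, mip_smul, hA.2.1, hB.2.1]; ring
    · intro l hl
      have h1 := hA.2.2 l hl
      have h2 := hB.2.2 l hl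
      simp [Matrix.add_apply, Matrix.smul_apply, h1, h2]
  · intro A hA c hc
    refine ⟨CP_smul (fun x hx c hc => soc_smul hx hc) hA.1 hc, ?_, ?_⟩
    · rw [mip_smul, hA.2.1]; ring
    · intro l hl
      simp [Matrix.smul_apply, hA.2.2 l hl]
  · intro a ha b hb hab
    have htau : mip (Jmat m) a = 0 ∧ mip (Jmat m) b = 0 := by
      have h1 : mip (Jmat m) a + mip (Jmat m) b = 0 := by rw [← mip_add]; exact hab.2.1
      have h2 := CP_tau_nonneg ha
      have h3 := CP_tau_nonneg hb
      constructor <;> linarith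
    have hdiag : ∀ l : Fin (m+1), r ≤ l.val → a l l = 0 ∧ b l l = 0 := by
      intro l hl
      have h1 : a l l + b l l = 0 := by
        have := hab.2.2 l hl
        simpa [Matrix.add_apply] using this
      have h2 := CP_diag_nonneg ha l
      have h3 := CP_diag_nonneg hb l
      constructor <;> linarith
    exact ⟨⟨ha, htau.1, fun l hl => (hdiag l hl).1⟩, ⟨hb, htau.2, fun l hl => (hdiag l hl).2⟩⟩

lemma top_isFace : IsFaceOf (CPset (soc m)) (CPset (soc m)) := by
  refine ⟨⟨0, zero_mem_CP zero_mem_soc⟩, le_refl _, CP_convex, ?_, ?_⟩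
  · intro A hA c hc
    exact CP_smul (fun x hx c hc => soc_smul hx hc) hA hc
  · intro a ha b hb _
    exact ⟨ha, hb⟩

lemma uvec1_zero : uvec m 1 0 = 1 := by simp [uvec]

lemma uvec1_one (hm : 1 ≤ m) : uvec m 1 ⟨1, by omega⟩ = 1 := by simp [uvec]

lemma uvec1_hi {l : Fin (m+1)} (hl : 2 ≤ l.val) : uvec m 1 l = 0 := by
  have h1 : l.val ≠ 0 := by omega
  have h2 : l.val ≠ 1 := by omega
  simp [uvec, h1, h2]

lemma CP_sub01 (hm : 1 ≤ m) {B : Matrix (Fin (m+1)) (Fin (m+1)) ℝ}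
    (hB : B ∈ CPset (soc m)) (hdiag : ∀ l : Fin (m+1), 2 ≤ l.val → B l l = 0)
    (htau : mip (Jmat m) B = 0) :
    B 0 ⟨1, by omega⟩ ≤ B 0 0 ∧ (B 0 ⟨1, by omega⟩ = B 0 0 → B ∈ Rface m) := by
  classical
  set e1 : Fin (m+1) := ⟨1, by omega⟩ with he1
  obtain ⟨k, hk, f, hf, rfl⟩ := hB
  set B : Matrix (Fin (m+1)) (Fin (m+1)) ℝ := ∑ i, Matrix.vecMulVec (f i) (f i) with hBdef
  have h2d : ∀ l : Fin (m+1), 2 ≤ l.val → ∀ i, f i l = 0 := by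
    intro l hl i
    have h1 := hdiag l hl
    rw [hBdef, CP_decomp_diag rfl l] at h1
    have := (Finset.sum_eq_zero_iff_of_nonneg
      (fun i _ => sq_nonneg (f i l))).1 h1 i (Finset.mem_univ i)
    exact pow_eq_zero_iff (by norm_num) |>.1 this
  have hq : ∀ i, qf m (f i) = 0 := by
    intro i
    have h1 : mip (Jmat m) B = ∑ i, qf m (f i) := by
      rw [hBdef, mip_sum]; simp_rw [mip_vmv]
    rw [htau] at h1
    exact (Finset.sum_eq_zero_iff_of_nonneg
      (fun i _ => qf_nonneg_of_mem (hf i))).1 h1.symm i (Finset.mem_univ i)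
  have hsq : ∀ i, (f i e1)^2 = (f i 0)^2 := by
    intro i
    have h1 := hq i
    unfold qf at h1
    have h2 : ∑ l : Fin m, (f i l.succ)^2 = (f i e1)^2 := by
      have hterm : ∀ l : Fin m, (f i l.succ)^2 = if l.val = 0 then (f i e1)^2 else 0 := by
        intro l
        by_cases h : l.val = 0
        · have : l.succ = e1 := by
            apply Fin.ext
            show l.val + 1 = 1
            omega
          simp [h, this]
        · have hge : 2 ≤ (l.succ : Fin (m+1)).val := by
            show 2 ≤ l.val + 1
            omega
          rw [h2d _ hge i]
          simp [h]
      simp_rw [hterm]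
      exact sum_if_val 0 (by omega) _
    rw [h2] at h1
    linarith
  have h0 : ∀ i, 0 ≤ f i 0 := fun i => (mem_soc_iff.1 (hf i)).1
  have h1le : ∀ i, f i e1 ≤ f i 0 := by
    intro i
    nlinarith [hsq i, h0 i, sq_nonneg (f i e1 - f i 0), sq_nonneg (f i e1 + f i 0)]
  have hB00 : B 0 0 = ∑ i, f i 0 * f i 0 := by
    rw [hBdef]; simp [Matrix.sum_apply, vmv_apply]
  have hB01 : B 0 e1 = ∑ i, f i 0 * f i e1 := by
    rw [hBdef]; simp [Matrix.sum_apply, vmv_apply]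
  have hdiff : B 0 0 - B 0 e1 = ∑ i, f i 0 * (f i 0 - f i e1) := by
    rw [hB00, hB01, ← Finset.sum_sub_distrib]
    apply Finset.sum_congr rfl
    intro i _; ring
  have hterms : ∀ i, 0 ≤ f i 0 * (f i 0 - f i e1) := by
    intro i
    exact mul_nonneg (h0 i) (by linarith [h1le i])
  constructor
  · have : 0 ≤ B 0 0 - B 0 e1 := by
      rw [hdiff]
      exact Finset.sum_nonneg fun i _ => hterms i
    linarith
  · intro heq
    have hzero : ∑ i, f i 0 * (f i 0 - f i e1) = 0 := by
      rw [← hdiff, heq]; ring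
    have hterm0 : ∀ i, f i 0 * (f i 0 - f i e1) = 0 := by
      intro i
      exact (Finset.sum_eq_zero_iff_of_nonneg (fun i _ => hterms i)).1 hzero i (Finset.mem_univ i)
    have hfeq : ∀ i, f i = (f i 0) • uvec m 1 := by
      intro i
      funext l
      simp only [Pi.smul_apply, smul_eq_mul]
      rcases Nat.lt_or_ge l.val 2 with hl | hl
      · rcases Nat.lt_or_ge l.val 1 with hl0 | hl1
        · have : l = 0 := by
            apply Fin.ext
            simp only [Fin.val_zero]
            omega
          rw [this, uvec1_zero]; ring
        · have hle1 : l = e1 := by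
            apply Fin.ext
            simp only [he1]
            omega
          rw [hle1, he1, uvec1_one hm]
          rcases mul_eq_zero.1 (hterm0 i) with h | h
          · have : (f i e1)^2 = 0 := by rw [hsq i, h]; ring
            rw [h]
            have := pow_eq_zero_iff (n := 2) (by norm_num) |>.1 this
            simpa [he1] using this
          · have : f i e1 = f i 0 := by linarith
            rw [this]; ring
      · rw [h2d l hl i, uvec1_hi hl]; ring
    refine ⟨∑ i, (f i 0)^2, Finset.sum_nonneg fun i _ => sq_nonneg _, ?_⟩
    rw [hBdef]
    rw [Finset.sum_congr rfl (fun i _ => by rw [hfeq i, vmv_smul])]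
    rw [← Finset.sum_smul]

lemma Rface_isFace (hm : 1 ≤ m) : IsFaceOf (CPset (soc m)) (Rface m) := by
  have humem : uvec m 1 ∈ soc m := uvec_mem_soc 1 le_rfl hm
  have hUC : ∀ c : ℝ, 0 ≤ c → c • Matrix.vecMulVec (uvec m 1) (uvec m 1) ∈ CPset (soc m) :=
    fun c hc => CP_smul (fun x hx c hc => soc_smul hx hc) (single_mem_CP humem) hc
  have hqu : qf m (uvec m 1) = 0 := qf_uvec 1 le_rfl hm
  refine ⟨⟨0, 0, le_refl _, by simp⟩, ?_, ?_, ?_, ?_⟩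
  · rintro A ⟨c, hc, rfl⟩
    exact hUC c hc
  · rintro A ⟨c1, hc1, rfl⟩ B ⟨c2, hc2, rfl⟩ α β hα hβ hαβ
    refine ⟨α * c1 + β * c2, by positivity, ?_⟩
    rw [smul_smul, smul_smul, ← add_smul]
  · rintro A ⟨c1, hc1, rfl⟩ c hc
    exact ⟨c * c1, by positivity, by rw [smul_smul]⟩
  · rintro a ha b hb ⟨c, hc, hab⟩
    set U : Matrix (Fin (m+1)) (Fin (m+1)) ℝ := Matrix.vecMulVec (uvec m 1) (uvec m 1) with hU
    set e1 : Fin (m+1) := ⟨1, by omega⟩ with he1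
    have hUll : ∀ l l', U l l' = uvec m 1 l * uvec m 1 l' := fun l l' => rfl
    have htauU : mip (Jmat m) U = 0 := by rw [hU, mip_vmv, hqu]
    have htaus : mip (Jmat m) a + mip (Jmat m) b = 0 := by
      rw [← mip_add, hab, mip_smul, htauU]; ring
    have htaua : mip (Jmat m) a = 0 := by
      have h2 := CP_tau_nonneg ha
      have h3 := CP_tau_nonneg hb
      linarith
    have htaub : mip (Jmat m) b = 0 := by linarith [CP_tau_nonneg ha, CP_tau_nonneg hb]
    have hdiag : ∀ l : Fin (m+1), 2 ≤ l.val → a l l = 0 ∧ b l l = 0 := by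
      intro l hl
      have h1 : a l l + b l l = 0 := by
        have := congrFun (congrFun hab l) l
        simp only [Matrix.add_apply, Matrix.smul_apply, smul_eq_mul] at this
        rw [this, hUll, uvec1_hi hl]; ring
      have h2 := CP_diag_nonneg ha l
      have h3 := CP_diag_nonneg hb l
      constructor <;> linarith
    have hsa := CP_sub01 hm ha (fun l hl => (hdiag l hl).1) htaua
    have hsb := CP_sub01 hm hb (fun l hl => (hdiag l hl).2) htaub
    have h00 : a 0 0 + b 0 0 = c := by
      have := congrFun (congrFun hab 0) 0
      simp only [Matrix.add_apply, Matrix.smul_apply, smul_eq_mul] at this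
      rw [this, hUll, uvec1_zero]; ring
    have h01 : a 0 e1 + b 0 e1 = c := by
      have := congrFun (congrFun hab 0) e1
      simp only [Matrix.add_apply, Matrix.smul_apply, smul_eq_mul] at this
      rw [this, hUll, uvec1_zero, he1, uvec1_one hm]; ring
    have heqa : a 0 e1 = a 0 0 := by
      have := hsa.1
      have := hsb.1
      simp only [he1] at *
      linarith
    have heqb : b 0 e1 = b 0 0 := by
      have := hsa.1
      have := hsb.1
      simp only [he1] at *
      linarith
    exact ⟨hsa.2 heqa, hsb.2 heqb⟩

lemma uvec_zero_app (r : ℕ) : uvec m r 0 = 1 := by simp [uvec]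

lemma uvec_at (r : ℕ) (hr : r ≤ m) : uvec m r ⟨r, by omega⟩ = 1 := by simp [uvec]

lemma uvec_ne {r : ℕ} {l : Fin (m+1)} (h0 : l.val ≠ 0) (hr : l.val ≠ r) : uvec m r l = 0 := by
  simp [uvec, h0, hr]

lemma qf_uvec0 : qf m (uvec m 0) = 1 := by
  unfold qf
  rw [uvec_zero_app]
  have hterm : ∀ l : Fin m, (uvec m 0 l.succ)^2 = 0 := by
    intro l
    have : (l.succ : Fin (m+1)).val = l.val + 1 := rfl
    rw [uvec_ne (by omega) (by omega)]
    ring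
  simp_rw [hterm]
  simp

lemma uvec0_mem_soc : uvec m 0 ∈ soc m := by
  rw [mem_soc_iff]
  refine ⟨by rw [uvec_zero_app]; norm_num, by rw [qf_uvec0]; norm_num⟩

lemma wvec_zero_app : wvec m 0 = 1 := by simp [wvec]

lemma wvec_one_app (hm : 1 ≤ m) : wvec m ⟨1, by omega⟩ = -1 := by simp [wvec]

lemma wvec_hi {l : Fin (m+1)} (hl : 2 ≤ l.val) : wvec m l = 0 := by
  have h1 : l.val ≠ 0 := by omega
  have h2 : l.val ≠ 1 := by omega
  simp [wvec, h1, h2]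

lemma zero_lt_R (hm : 1 ≤ m) : ({0} : Set (Matrix (Fin (m+1)) (Fin (m+1)) ℝ)) < Rface m := by
  apply lt_of_le_of_ne
  · intro A hA
    rw [Set.mem_singleton_iff] at hA
    exact ⟨0, le_rfl, by simp [hA]⟩
  · intro h
    have hU : Matrix.vecMulVec (uvec m 1) (uvec m 1) ∈ Rface m := ⟨1, zero_le_one, by simp⟩
    rw [← h, Set.mem_singleton_iff] at hU
    have := congrFun (congrFun hU 0) 0
    rw [vmv_apply, uvec_zero_app] at this
    simp at this

lemma R_le_F2 (hm : 1 ≤ m) : Rface m ⊆ Fface m 2 := by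
  rintro A ⟨c, hc, rfl⟩
  refine ⟨CP_smul (fun x hx c hc => soc_smul hx hc)
    (single_mem_CP (uvec_mem_soc 1 le_rfl hm)) hc, ?_, ?_⟩
  · rw [mip_smul, mip_vmv, qf_uvec 1 le_rfl hm]; ring
  · intro l hl
    rw [Matrix.smul_apply, vmv_apply, uvec1_hi hl]
    simp

lemma R_lt_F2 (hm : 1 ≤ m) : Rface m < Fface m 2 := by
  apply lt_of_le_of_ne (R_le_F2 hm)
  intro h
  have hW : Matrix.vecMulVec (wvec m) (wvec m) ∈ Fface m 2 := by
    refine ⟨single_mem_CP (wvec_mem_soc hm), ?_, ?_⟩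
    · rw [mip_vmv, qf_wvec hm]
    · intro l hl
      rw [vmv_apply, wvec_hi hl]
      ring
  rw [← h] at hW
  obtain ⟨c, hc, hW⟩ := hW
  have h00 := congrFun (congrFun hW 0) 0
  have h01 := congrFun (congrFun hW 0) ⟨1, by omega⟩
  rw [vmv_apply, Matrix.smul_apply, vmv_apply, wvec_zero_app, uvec_zero_app] at h00
  rw [vmv_apply, Matrix.smul_apply, vmv_apply, wvec_zero_app, uvec_zero_app,
    wvec_one_app hm, uvec1_one hm] at h01
  simp at h00 h01
  linarith

lemma F_le_F {r : ℕ} : Fface m r ⊆ Fface m (r+1) := by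
  rintro A ⟨h1, h2, h3⟩
  exact ⟨h1, h2, fun l hl => h3 l (by omega)⟩

lemma F_lt_F (r : ℕ) (h2 : 1 ≤ r) (h3 : r ≤ m) : Fface m r < Fface m (r+1) := by
  apply lt_of_le_of_ne F_le_F
  intro h
  have hV : Matrix.vecMulVec (uvec m r) (uvec m r) ∈ Fface m (r+1) := by
    refine ⟨single_mem_CP (uvec_mem_soc r h2 h3), ?_, ?_⟩
    · rw [mip_vmv, qf_uvec r h2 h3]
    · intro l hl
      rw [vmv_apply, uvec_ne (by omega) (by omega)]
      ring
  rw [← h] at hV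
  have := hV.2.2 ⟨r, by omega⟩ (by simp)
  rw [vmv_apply, uvec_at r h3] at this
  norm_num at this

lemma F_lt_top (hm : 1 ≤ m) : Fface m (m+1) < CPset (soc m) := by
  apply lt_of_le_of_ne (fun A hA => hA.1)
  intro h
  have hE : Matrix.vecMulVec (uvec m 0) (uvec m 0) ∈ CPset (soc m) :=
    single_mem_CP uvec0_mem_soc
  rw [← h] at hE
  have := hE.2.1
  rw [mip_vmv, qf_uvec0] at this
  norm_num at this

def Gchain (m : ℕ) : Fin (m+3) → Set (Matrix (Fin (m+1)) (Fin (m+1)) ℝ) := fun i =>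
  if i.val = 0 then {0}
  else if i.val = 1 then Rface m
  else if i.val = m + 2 then CPset (soc m)
  else Fface m i.val

lemma Gchain_zero {i : Fin (m+3)} (h : i.val = 0) : Gchain m i = {0} := by
  unfold Gchain; rw [if_pos h]

lemma Gchain_R {i : Fin (m+3)} (h : i.val = 1) : Gchain m i = Rface m := by
  unfold Gchain; rw [if_neg (by omega), if_pos h]

lemma Gchain_F {i : Fin (m+3)} {r : ℕ} (h : i.val = r) (h2 : 2 ≤ r) (h3 : r ≤ m + 1) :
    Gchain m i = Fface m r := by
  unfold Gchain; rw [if_neg (by omega), if_neg (by omega), if_neg (by omega), h]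

lemma Gchain_top {i : Fin (m+3)} (h : i.val = m + 2) : Gchain m i = CPset (soc m) := by
  unfold Gchain; rw [if_neg (by omega), if_neg (by omega), if_pos h]

lemma Gchain_strictMono (hm : 1 ≤ m) : StrictMono (Gchain m) := by
  rw [Fin.strictMono_iff_lt_succ]
  intro i
  have hcs : (Fin.castSucc i).val = i.val := rfl
  have hsc : (Fin.succ i).val = i.val + 1 := rfl
  have hib : i.val < m + 2 := i.isLt
  rcases Nat.lt_or_ge i.val 1 with h0 | h1
  · have h : i.val = 0 := by omega
    rw [Gchain_zero (by omega), Gchain_R (by omega)]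
    exact zero_lt_R hm
  rcases Nat.lt_or_ge i.val 2 with h1' | h2
  · have h : i.val = 1 := by omega
    rw [Gchain_R (by omega), Gchain_F (r := 2) (by omega) le_rfl (by omega)]
    exact R_lt_F2 hm
  rcases Nat.lt_or_ge i.val (m+2) with h3 | h4
  · rcases Nat.lt_or_ge i.val (m+1) with h5 | h6
    · rw [Gchain_F (r := i.val) rfl h2 (by omega),
        Gchain_F (r := i.val + 1) (by omega) (by omega) (by omega)]
      exact F_lt_F i.val (by omega) (by omega)
    · have h : i.val = m + 1 := by omega
      rw [Gchain_F (r := m+1) (by omega) (by omega) le_rfl, Gchain_top (by omega)]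
      exact F_lt_top hm
  · omega

lemma Gchain_faces (hm : 1 ≤ m) : ∀ i, IsFaceOf (CPset (soc m)) (Gchain m i) := by
  intro i
  unfold Gchain
  split_ifs with h1 h2 h3
  · exact zero_isFace
  · exact Rface_isFace hm
  · exact top_isFace
  · exact Fface_isFace _

lemma fin_strictMono_le {l : ℕ} {h : Fin l → ℕ} (hmono : StrictMono h) :
    ∀ i : Fin l, i.val ≤ h i := by
  have key : ∀ v : ℕ, ∀ i : Fin l, i.val = v → v ≤ h i := by
    intro v
    induction v with
    | zero => intro i _; omega
    | succ v ih =>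
        intro i hi
        have hv : v < l := by omega
        have hlt : (⟨v, hv⟩ : Fin l) < i := by
          rw [Fin.lt_def]
          simp
          omega
        have h1 := hmono hlt
        have h2 := ih ⟨v, hv⟩ rfl
        omega
  exact fun i => key i.val i rfl

end Chain


end

/-- the length of a longest chain of faces of `CP(Lⁿ)` is `n + 2`
(here `n = m + 1 ≥ 2`, so `n + 2 = m + 3`). -/
theorem stmt15 (m : ℕ) (hm : 1 ≤ m) :
    (∃ F : Fin (m + 3) → Set (Matrix (Fin (m+1)) (Fin (m+1)) ℝ),
        StrictMono F ∧ ∀ i, IsFaceOf (CPset (soc m)) (F i)) ∧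
    (∀ (l : ℕ) (F : Fin l → Set (Matrix (Fin (m+1)) (Fin (m+1)) ℝ)),
        StrictMono F → (∀ i, IsFaceOf (CPset (soc m)) (F i)) → l ≤ m + 3) := by
  constructor
  · exact ⟨Gchain m, Gchain_strictMono hm, Gchain_faces hm⟩
  · intro l F hSM hFace
    rcases Nat.eq_zero_or_pos l with rfl | hl
    · omega
    have hμ : StrictMono (fun i =>
        Module.finrank ℝ (Submodule.span ℝ (Kset m (F i))) + sval m (F i)) := by
      intro i j hij
      have hlt := hSM hij
      exact mu_strict (hFace i) (hFace j) (le_of_lt hlt) (ne_of_lt hlt)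
    have hlast := fin_strictMono_le hμ ⟨l - 1, by omega⟩
    have hbound := mu_bound (hFace ⟨l - 1, by omega⟩)
    simp only at hlast
    omega
end

section
/- Let K ⊆ ℝⁿ be a closed convex cone with nonempty interior and let x ∈ ℝⁿ with x ∉ K* ∪ (−K*), where K* is the dual cone of K. Then ℝ₊·xxᵀ is an exposed face (an exposed ray) of COP(K). -/
open Matrix
open scoped Pointwise

section Stmt17Aux

open Matrix

variable {n : ℕ}

lemma mip_vecMulVec (a : Fin n → ℝ) (A : Matrix (Fin n) (Fin n) ℝ) :
    mip (Matrix.vecMulVec a a) A = a ⬝ᵥ A.mulVec a := by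
  unfold mip Matrix.mulVec dotProduct
  simp only [Matrix.vecMulVec_apply, Finset.mul_sum]
  exact Finset.sum_congr rfl fun i _ => Finset.sum_congr rfl fun j _ => by ring

lemma mip_add_left (B C A : Matrix (Fin n) (Fin n) ℝ) :
    mip (B + C) A = mip B A + mip C A := by
  unfold mip
  rw [← Finset.sum_add_distrib]
  refine Finset.sum_congr rfl fun i _ => ?_
  rw [← Finset.sum_add_distrib]
  exact Finset.sum_congr rfl fun j _ => by simp [Matrix.add_apply, add_mul]

lemma mip_finset_sum_left {ι : Type*} (s : Finset ι) (B : ι → Matrix (Fin n) (Fin n) ℝ)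
    (A : Matrix (Fin n) (Fin n) ℝ) :
    mip (∑ i ∈ s, B i) A = ∑ i ∈ s, mip (B i) A := by
  classical
  induction s using Finset.induction_on with
  | empty => simp [mip]
  | insert _ _ h ih => rw [Finset.sum_insert h, Finset.sum_insert h, mip_add_left, ih]

lemma mip_add_right (H A B : Matrix (Fin n) (Fin n) ℝ) :
    mip H (A + B) = mip H A + mip H B := by
  unfold mip
  rw [← Finset.sum_add_distrib]
  refine Finset.sum_congr rfl fun i _ => ?_
  rw [← Finset.sum_add_distrib]
  exact Finset.sum_congr rfl fun j _ => by simp [Matrix.add_apply, mul_add]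

lemma mip_smul_right (H A : Matrix (Fin n) (Fin n) ℝ) (c : ℝ) :
    mip H (c • A) = c * mip H A := by
  unfold mip
  rw [Finset.mul_sum]
  refine Finset.sum_congr rfl fun i _ => ?_
  rw [Finset.mul_sum]
  exact Finset.sum_congr rfl fun j _ => by simp [Matrix.smul_apply]; ring

lemma vecMulVec_mulVec' (w v y : Fin n → ℝ) :
    (Matrix.vecMulVec w v).mulVec y = (v ⬝ᵥ y) • w := by
  ext i
  unfold Matrix.mulVec dotProduct
  simp only [Matrix.vecMulVec_apply, Pi.smul_apply, smul_eq_mul]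
  rw [Finset.sum_mul]
  exact Finset.sum_congr rfl fun j _ => by ring

lemma quad_vecMulVec (x y : Fin n → ℝ) :
    y ⬝ᵥ (Matrix.vecMulVec x x).mulVec y = (x ⬝ᵥ y) ^ 2 := by
  rw [vecMulVec_mulVec', dotProduct_smul, smul_eq_mul, dotProduct_comm]
  ring

lemma symm_dot {A : Matrix (Fin n) (Fin n) ℝ} (hA : A.IsSymm) (u v : Fin n → ℝ) :
    u ⬝ᵥ A.mulVec v = v ⬝ᵥ A.mulVec u :=
  calc u ⬝ᵥ A.mulVec v = (A.mulVec v) ⬝ᵥ u := dotProduct_comm _ _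
    _ = (Matrix.vecMul v Aᵀ) ⬝ᵥ u := by rw [Matrix.vecMul_transpose]
    _ = (Matrix.vecMul v A) ⬝ᵥ u := by rw [hA]
    _ = v ⬝ᵥ A.mulVec u := (Matrix.dotProduct_mulVec v A u).symm

lemma coeff_zero_of_small (c d δ : ℝ) (hδ : 0 < δ)
    (h : ∀ t : ℝ, |t| < δ → 0 ≤ 2*t*c + t^2*d) : c = 0 := by
  by_contra hc
  have hc0 : 0 < |c| := abs_pos.mpr hc
  have hd0 : 0 < |d| + 1 := by positivity
  set m := min (δ/2) (|c|/(|d|+1)) with hm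
  have hm0 : 0 < m := lt_min (by linarith) (div_pos hc0 hd0)
  have hmδ : m < δ := lt_of_le_of_lt (min_le_left _ _) (by linarith)
  have hmc : m * (|d|+1) ≤ |c| := by
    have h2 : m ≤ |c|/(|d|+1) := min_le_right _ _
    calc m * (|d|+1) ≤ (|c|/(|d|+1)) * (|d|+1) := by nlinarith
      _ = |c| := by field_simp
  have ht1 := h m (by rwa [abs_of_pos hm0])
  have ht2 := h (-m) (by rwa [abs_neg, abs_of_pos hm0])
  have hd1 : d ≤ |d| := le_abs_self d
  rcases abs_cases c with ⟨he, _⟩ | ⟨he, _⟩ <;>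
    nlinarith [mul_le_mul_of_nonneg_left hmc hm0.le,
      mul_le_mul_of_nonneg_left hd1 (mul_pos hm0 hm0).le, mul_pos hm0 hm0]

lemma zero_quad_interior {K : Set (Fin n → ℝ)} {A : Matrix (Fin n) (Fin n) ℝ}
    (hA : A ∈ COPset K) {y : Fin n → ℝ} (hy : y ∈ interior K)
    (hq : y ⬝ᵥ A.mulVec y = 0) : A.mulVec y = 0 := by
  obtain ⟨ε, hε0, hball⟩ := Metric.isOpen_iff.mp isOpen_interior y hy
  have hmem : ∀ w : Fin n → ℝ, ∀ t : ℝ, |t| * ‖w‖ < ε → y + t • w ∈ K := by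
    intro w t ht
    refine interior_subset (hball ?_)
    rw [Metric.mem_ball, dist_self_add_left, norm_smul, Real.norm_eq_abs]
    exact ht
  have hzero : ∀ w : Fin n → ℝ, w ⬝ᵥ A.mulVec y = 0 := by
    intro w
    have hδ0 : 0 < ε / (‖w‖ + 1) := by positivity
    refine coeff_zero_of_small _ (w ⬝ᵥ A.mulVec w) _ hδ0 ?_
    intro t ht
    have hmemt : y + t • w ∈ K := by
      refine hmem w t ?_
      have h1 : |t| * ‖w‖ ≤ |t| * (‖w‖ + 1) := by nlinarith [abs_nonneg t]
      have h2 : |t| * (‖w‖ + 1) < (ε / (‖w‖ + 1)) * (‖w‖ + 1) :=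
        mul_lt_mul_of_pos_right ht (by positivity)
      have h3 : (ε / (‖w‖ + 1)) * (‖w‖ + 1) = ε := by field_simp
      linarith
    have h0 := hA.2 _ hmemt
    have hexp : (y + t • w) ⬝ᵥ A.mulVec (y + t • w) =
        2*t*(w ⬝ᵥ A.mulVec y) + t^2*(w ⬝ᵥ A.mulVec w) := by
      have h1 := symm_dot hA.1 y w
      simp only [Matrix.mulVec_add, Matrix.mulVec_smul, add_dotProduct,
        smul_dotProduct, dotProduct_add, dotProduct_smul, smul_eq_mul]
      rw [hq, h1]
      ring
    rw [hexp] at h0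
    exact h0
  have := hzero (A.mulVec y)
  rwa [dotProduct_self_eq_zero] at this

end Stmt17Aux


/-- if `K ⊆ ℝⁿ` is a closed convex cone with nonempty interior and
`x ∉ K* ∪ (−K*)`, then `ℝ₊ xxᵀ` is an exposed ray of `COP(K)`. -/
theorem stmt17 (n : ℕ) (K : Set (Fin n → ℝ)) (hKcl : IsClosed K)
    (hKconv : Convex ℝ K)
    (hKcone : ∀ x ∈ K, ∀ c : ℝ, 0 ≤ c → c • x ∈ K)
    (hKint : (interior K).Nonempty)
    (x : Fin n → ℝ)
    (hx1 : ¬ ∀ y ∈ K, 0 ≤ x ⬝ᵥ y)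
    (hx2 : ¬ ∀ y ∈ K, 0 ≤ (-x) ⬝ᵥ y) :
    IsExposedFaceOf (COPset K) (rayOf (Matrix.vecMulVec x x)) ∧
      setDim (rayOf (Matrix.vecMulVec x x)) = 1 := by
  classical
  push_neg at hx1 hx2
  obtain ⟨y₁, hy₁K, hy₁⟩ := hx1
  obtain ⟨y₂, hy₂K, hy₂'⟩ := hx2
  have hy₂ : 0 < x ⬝ᵥ y₂ := by
    have := hy₂'
    simp only [neg_dotProduct] at this
    linarith
  have hx0 : x ≠ 0 := by
    rintro rfl
    simp [zero_dotProduct] at hy₂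
  set s : ℝ := x ⬝ᵥ x with hs_def
  have hs0 : 0 ≤ s := Finset.sum_nonneg fun i _ => mul_self_nonneg _
  have hsne : s ≠ 0 := fun h => hx0 (dotProduct_self_eq_zero.mp h)
  have hs : 0 < s := lt_of_le_of_ne hs0 (Ne.symm hsne)
  obtain ⟨e, he⟩ := hKint
  -- interior points with strict signs
  have hsign : ∀ x' : Fin n → ℝ, ∀ y ∈ K, x' ⬝ᵥ y < 0 → ∃ v ∈ interior K, x' ⬝ᵥ v < 0 := by
    intro x' y hyK hy
    set a : ℝ := x' ⬝ᵥ y with ha_def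
    set b : ℝ := x' ⬝ᵥ e with hb_def
    set t : ℝ := min (1/2 : ℝ) ((-a)/(2*(|b|+1))) with ht_def
    have hb1 : (0:ℝ) < 2*(|b|+1) := by positivity
    have ht0 : 0 < t := lt_min one_half_pos (div_pos (by linarith) hb1)
    have ht2 : t ≤ 1/2 := min_le_left _ _
    have ht3 : t * (2*(|b|+1)) ≤ -a := by
      have h2 : t ≤ (-a)/(2*(|b|+1)) := min_le_right _ _
      calc t * (2*(|b|+1)) ≤ ((-a)/(2*(|b|+1))) * (2*(|b|+1)) :=
            mul_le_mul_of_nonneg_right h2 hb1.le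
        _ = -a := by field_simp
    refine ⟨t • e + (1 - t) • y,
      hKconv.combo_interior_closure_mem_interior he (subset_closure hyK) ht0
        (by linarith) (by ring), ?_⟩
    have hdot : x' ⬝ᵥ (t • e + (1 - t) • y) = t * b + (1 - t) * a := by
      simp [dotProduct_add, dotProduct_smul, smul_eq_mul]
      rfl
    rw [hdot]
    nlinarith [le_abs_self b, abs_nonneg b,
      mul_nonneg (by linarith : (0:ℝ) ≤ 1/2 - t) (by linarith : (0:ℝ) ≤ -a),
      mul_nonneg ht0.le (sub_nonneg.mpr (le_abs_self b))]
  obtain ⟨v, hvInt, hv⟩ := hsign x y₁ hy₁K hy₁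
  obtain ⟨w, hwInt, hw'⟩ := hsign (-x) y₂ hy₂K hy₂'
  have hw : 0 < x ⬝ᵥ w := by
    simp only [neg_dotProduct] at hw'
    linarith
  -- the point z in the interior with x ⬝ᵥ z = 0
  set a0 : ℝ := (x ⬝ᵥ w) / ((x ⬝ᵥ w) - (x ⬝ᵥ v)) with ha0_def
  have hden : 0 < (x ⬝ᵥ w) - (x ⬝ᵥ v) := by linarith
  have ha00 : 0 < a0 := div_pos hw hden
  have ha01 : a0 < 1 := (div_lt_one hden).mpr (by linarith)
  set z : Fin n → ℝ := a0 • v + (1 - a0) • w with hz_def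
  have hzInt : z ∈ interior K :=
    hKconv.interior hvInt hwInt ha00.le (by linarith) (by ring)
  have hzx : x ⬝ᵥ z = 0 := by
    have h : x ⬝ᵥ z = a0 * (x ⬝ᵥ v) + (1 - a0) * (x ⬝ᵥ w) := by
      simp [hz_def, dotProduct_add, dotProduct_smul, smul_eq_mul]
    rw [h, ha0_def]
    field_simp
    ring
  obtain ⟨ε, hε0, hball⟩ := Metric.isOpen_iff.mp isOpen_interior z hzInt
  -- projections of the standard basis onto the hyperplane x-perp
  set p : Fin n → (Fin n → ℝ) := fun i => Pi.single i 1 - (x i / s) • x with hp_def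
  have hpx : ∀ i, x ⬝ᵥ p i = 0 := by
    intro i
    simp only [hp_def, dotProduct_sub, dotProduct_smul, smul_eq_mul,
      dotProduct_single, mul_one, ← hs_def]
    field_simp
    simp
  set δ : Fin n → ℝ := fun i => ε / (2 * (‖p i‖ + 1)) with hδ_def
  have hδ0 : ∀ i, 0 < δ i := by
    intro i
    rw [hδ_def]
    positivity
  set g : Fin n → (Fin n → ℝ) := fun i => z + δ i • p i with hg_def
  have hgInt : ∀ i, g i ∈ interior K := by
    intro i
    apply hball
    rw [Metric.mem_ball, hg_def]
    simp only []
    rw [dist_self_add_left, norm_smul, Real.norm_eq_abs, abs_of_pos (hδ0 i)]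
    have h1 : δ i * (‖p i‖ + 1) = ε / 2 := by
      rw [hδ_def]
      field_simp
    nlinarith [norm_nonneg (p i), hδ0 i]
  have hgx : ∀ i, x ⬝ᵥ g i = 0 := by
    intro i
    simp [hg_def, dotProduct_add, dotProduct_smul, hzx, hpx i]
  set X := Matrix.vecMulVec x x with hX_def
  set H := Matrix.vecMulVec z z + ∑ i, Matrix.vecMulVec (g i) (g i) with hH_def
  have hmipH : ∀ A, mip H A = z ⬝ᵥ A.mulVec z + ∑ i, (g i) ⬝ᵥ A.mulVec (g i) := by
    intro A
    rw [hH_def, mip_add_left, mip_finset_sum_left, mip_vecMulVec]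
    congr 1
    exact Finset.sum_congr rfl fun i _ => mip_vecMulVec _ _
  have hnn : ∀ A ∈ COPset K, 0 ≤ mip H A := by
    intro A hA
    rw [hmipH]
    have h1 := hA.2 z (interior_subset hzInt)
    have h2 : ∀ i, 0 ≤ (g i) ⬝ᵥ A.mulVec (g i) := fun i => hA.2 _ (interior_subset (hgInt i))
    have h3 := Finset.sum_nonneg (fun i (_ : i ∈ Finset.univ) => h2 i)
    linarith
  have hXCOP : ∀ c : ℝ, 0 ≤ c → c • X ∈ COPset K := by
    intro c hc
    constructor
    · show (c • X)ᵀ = c • X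
      rw [Matrix.transpose_smul]
      congr 1
      ext i j
      simp [hX_def, Matrix.transpose_apply, Matrix.vecMulVec_apply, mul_comm]
    · intro y hy
      rw [Matrix.smul_mulVec, dotProduct_smul, smul_eq_mul, hX_def, quad_vecMulVec]
      exact mul_nonneg hc (sq_nonneg _)
  have hmipX : ∀ c : ℝ, mip H (c • X) = 0 := by
    intro c
    rw [mip_smul_right, hmipH, hX_def]
    simp [quad_vecMulVec, hzx, hgx]
  -- the key implication: zero inner product with H forces membership in the ray
  have key : ∀ A ∈ COPset K, mip H A = 0 → A ∈ rayOf X := by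
    intro A hA hmip
    rw [hmipH] at hmip
    have h1 : 0 ≤ z ⬝ᵥ A.mulVec z := hA.2 z (interior_subset hzInt)
    have h2 : ∀ i, 0 ≤ (g i) ⬝ᵥ A.mulVec (g i) := fun i => hA.2 _ (interior_subset (hgInt i))
    have h3 : (0:ℝ) ≤ ∑ i, (g i) ⬝ᵥ A.mulVec (g i) :=
      Finset.sum_nonneg fun i _ => h2 i
    have hz0 : z ⬝ᵥ A.mulVec z = 0 := by linarith
    have hsum0 : ∑ i, (g i) ⬝ᵥ A.mulVec (g i) = 0 := by linarith
    have hg0 : ∀ i, (g i) ⬝ᵥ A.mulVec (g i) = 0 := fun i =>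
      (Finset.sum_eq_zero_iff_of_nonneg (fun i _ => h2 i)).mp hsum0 i (Finset.mem_univ i)
    have hAz : A.mulVec z = 0 := zero_quad_interior hA hzInt hz0
    have hAg : ∀ i, A.mulVec (g i) = 0 := fun i => zero_quad_interior hA (hgInt i) (hg0 i)
    have hAp : ∀ i, A.mulVec (p i) = 0 := by
      intro i
      have h := hAg i
      rw [hg_def] at h
      simp only [] at h
      rw [Matrix.mulVec_add, Matrix.mulVec_smul, hAz, zero_add] at h
      exact (smul_eq_zero.mp h).resolve_left (hδ0 i).ne'
    set u := A.mulVec x with hu_def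
    have hcol : ∀ i j, A j i = (x i / s) * u j := by
      intro i j
      have h := hAp i
      rw [hp_def] at h
      simp only [] at h
      rw [Matrix.mulVec_sub, Matrix.mulVec_smul, sub_eq_zero] at h
      have h2 := congrFun h j
      simpa [Matrix.mulVec_single, Pi.smul_apply, smul_eq_mul, hu_def] using h2
    have hsymA : ∀ i j, A j i = A i j := fun i j => hA.1.apply i j
    have hcross : ∀ i j, x j * u i = x i * u j := by
      intro i j
      have e1 : A j i = (x i / s) * u j := hcol i j
      have e2 : A i j = (x j / s) * u i := hcol j i
      have e3 : (x i / s) * u j = (x j / s) * u i := by rw [← e1, ← e2, hsymA]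
      field_simp [hsne] at e3
      linarith
    obtain ⟨j₀, hj₀⟩ : ∃ j₀, x j₀ ≠ 0 := by
      by_contra hcon
      push_neg at hcon
      exact hx0 (funext hcon)
    have hu : ∀ i, u i = (u j₀ / x j₀) * x i := by
      intro i
      have h := hcross i j₀
      field_simp [hj₀]
      linear_combination h
    have hAeq : A = (u j₀ / (x j₀ * s)) • X := by
      ext i j
      rw [Matrix.smul_apply, hX_def, Matrix.vecMulVec_apply, smul_eq_mul]
      rw [hcol j i, hu i]
      field_simp
    have hcnn : 0 ≤ u j₀ / (x j₀ * s) := by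
      have hq := hA.2 y₂ hy₂K
      rw [hAeq, Matrix.smul_mulVec, dotProduct_smul, smul_eq_mul, hX_def,
        quad_vecMulVec] at hq
      have hp2 : 0 < (x ⬝ᵥ y₂) ^ 2 := pow_pos hy₂ 2
      nlinarith
    exact ⟨u j₀ / (x j₀ * s), hcnn, hAeq⟩
  -- assembling the face structure
  have hsubCOP : rayOf X ⊆ COPset K := by
    rintro A ⟨c, hc, rfl⟩
    exact hXCOP c hc
  have hface : IsFaceOf (COPset K) (rayOf X) := by
    refine ⟨⟨X, 1, zero_le_one, (one_smul ℝ X).symm⟩, hsubCOP, ?_, ?_, ?_⟩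
    · rintro A ⟨c₁, hc₁, rfl⟩ B ⟨c₂, hc₂, rfl⟩ t₁ t₂ ht₁ ht₂ hts
      exact ⟨t₁ * c₁ + t₂ * c₂, by positivity, by rw [smul_smul, smul_smul, add_smul]⟩
    · rintro A ⟨c, hc, rfl⟩ c' hc'
      exact ⟨c' * c, mul_nonneg hc' hc, (smul_smul c' c X)⟩
    · intro a ha b hb hab
      obtain ⟨c, hc, heq⟩ := hab
      have h0 : mip H a + mip H b = 0 := by
        rw [← mip_add_right, heq, hmipX]
      have h1 := hnn a ha
      have h2 := hnn b hb
      exact ⟨key a ha (by linarith), key b hb (by linarith)⟩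
  refine ⟨⟨hface, H, hnn, ?_⟩, ?_⟩
  · ext A
    constructor
    · rintro ⟨c, hc, rfl⟩
      exact ⟨hXCOP c hc, hmipX c⟩
    · rintro ⟨hA, h0⟩
      exact key A hA h0
  · have hXne : X ≠ 0 := by
      rw [hX_def]
      intro h
      obtain ⟨j₀, hj₀⟩ : ∃ j₀, x j₀ ≠ 0 := by
        by_contra hcon
        push_neg at hcon
        exact hx0 (funext hcon)
      have h2 := congrFun (congrFun h j₀) j₀
      rw [Matrix.vecMulVec_apply, Matrix.zero_apply] at h2
      exact hj₀ (mul_self_eq_zero.mp h2)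
    have hspan : Submodule.span ℝ (rayOf X) = Submodule.span ℝ {X} := by
      apply le_antisymm
      · rw [Submodule.span_le]
        rintro A ⟨c, hc, rfl⟩
        exact Submodule.smul_mem _ c (Submodule.subset_span rfl)
      · rw [Submodule.span_le, Set.singleton_subset_iff]
        exact Submodule.subset_span ⟨1, zero_le_one, (one_smul ℝ X).symm⟩
    unfold setDim
    rw [hspan]
    exact finrank_span_singleton hXne
end
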